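/- (General forking lemma bound) Let A be a randomized algorithm taking input x and q values h_1,...,h_q from a set H of size |H| = h ≥ 2, outputting (J, σ) with J ∈ {0,...,q}. Let acc be the probability that J ≥ 1. Let F_A be the forking algorithm that runs A once with random coins and fresh h_i's obtaining (I, σ); if I = 0 outputs failure; otherwise re-runs A with the same coins and the same h_1,...,h_{I−1} but fresh h'_I,...,h'_q obtaining (I', σ'), succeeding if I = I' and h_I ≠ h'_I. Let frk be the success probability of F_A. Then frk ≥ acc·(acc/q − 1/h), equivalently acc ≤ q/h + √(q·frk). -/

import Mathlib

open Finset
open scoped ENNReal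

set_option linter.unusedSectionVars false

section Counting
variable {H : Type*} [Fintype H] [DecidableEq H] [Nonempty H] {q : ℕ}

private noncomputable def glueF (i : Fin q) (hs hs' : Fin q → H) : Fin q → H :=
  fun j => if j < i then hs j else hs' j

private noncomputable def prefF (i : Fin q) (hs : Fin q → H) : Fin q → H :=
  fun j => if j < i then hs j else Classical.arbitrary H

private lemma prefF_idem (i : Fin q) (hs : Fin q → H) : prefF i (prefF i hs) = prefF i hs := by
  funext j; simp only [prefF]; split <;> simp_all

private lemma prefF_glueF (i : Fin q) (hs hs' : Fin q → H) :
    prefF i (glueF i hs hs') = prefF i hs := by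
  funext j; simp only [prefF, glueF]; split <;> simp_all

variable (g : (Fin q → H) → Option (Fin q))

open scoped Classical in
/-- number of single runs landing on index i -/
private noncomputable def cS (i : Fin q) : Finset (Fin q → H) :=
  univ.filter fun hs => g hs = some i

open scoped Classical in
/-- pairs (hs,hs') where both runs land on i -/
private noncomputable def dS (i : Fin q) : Finset ((Fin q → H) × (Fin q → H)) :=
  univ.filter fun pr => g pr.1 = some i ∧ g (glueF i pr.1 pr.2) = some i

open scoped Classical in
private noncomputable def pS (i : Fin q) : Finset (Fin q → H) :=
  univ.filter fun p => prefF i p = p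

open scoped Classical in
private noncomputable def eS (i : Fin q) : Finset ((Fin q → H) × (Fin q → H)) :=
  univ.filter fun pr => g pr.1 = some i ∧ g pr.2 = some i ∧ prefF i pr.1 = prefF i pr.2

open scoped Classical in
private lemma cS_card (i : Fin q) :
    (cS g i).card = ∑ p ∈ pS i, ((cS g i).filter fun hs => prefF i hs = p).card := by
  refine card_eq_sum_card_fiberwise fun hs _ => ?_
  simp [pS, prefF_idem]

open scoped Classical in
private lemma eS_card (i : Fin q) :
    (eS g i).card = ∑ p ∈ pS i, ((cS g i).filter fun hs => prefF i hs = p).card ^ 2 := by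
  rw [card_eq_sum_card_fiberwise (f := fun pr => prefF i pr.1) (t := pS (H := H) i)
    (fun pr hpr => by simp [pS, prefF_idem])]
  refine Finset.sum_congr rfl fun p hp => ?_
  have : (eS g i).filter (fun pr => prefF i pr.1 = p) =
      ((cS g i).filter fun hs => prefF i hs = p) ×ˢ ((cS g i).filter fun hs => prefF i hs = p) := by
    ext pr
    simp only [eS, cS, mem_filter, mem_univ, true_and, mem_product]
    constructor
    · rintro ⟨⟨h1, h2, h3⟩, h4⟩; exact ⟨⟨h1, h4⟩, ⟨h2, by rw [← h3, h4]⟩⟩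
    · rintro ⟨⟨h1, h4⟩, ⟨h2, h5⟩⟩; exact ⟨⟨h1, h2, by rw [h4, h5]⟩, h4⟩
  rw [this, card_product, sq]

open scoped Classical in
private lemma dS_card (i : Fin q) :
    (dS g i).card = (pS (H := H) i).card * (eS g i).card := by
  rw [card_eq_sum_card_fiberwise (f := fun pr => (pr.1, glueF i pr.1 pr.2)) (t := eS g i)
    (fun pr hpr => by
      simp only [mem_coe, dS, mem_filter, mem_univ, true_and] at hpr
      simp [eS, hpr.1, hpr.2, prefF_glueF])]
  rw [Finset.sum_congr rfl (fun e he => ?_), sum_const, smul_eq_mul, mul_comm]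
  -- fiber over e has card = (pS i).card
  simp only [eS, mem_filter, mem_univ, true_and] at he
  obtain ⟨he1, he2, he3⟩ := he
  have hglue12 : glueF i e.1 e.2 = e.2 := by
    funext j; simp only [glueF]; split
    · rename_i hj
      have := congrFun he3 j
      simpa only [prefF, if_pos hj] using this
    · rfl
  refine card_nbij' (fun pr => prefF i pr.2) (fun p => (e.1, glueF i p e.2)) ?_ ?_ ?_ ?_
  · intro pr _; simp [pS, prefF_idem]
  · intro p hp
    simp only [mem_coe, pS, mem_filter, mem_univ, true_and] at hp
    have hgg : glueF i e.1 (glueF i p e.2) = e.2 := by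
      funext j
      simp only [glueF]
      split
      · rename_i hj
        have := congrFun he3 j
        simpa only [prefF, if_pos hj] using this
      · rfl
    simp only [mem_coe, dS, mem_filter, mem_univ, true_and]
    exact ⟨⟨he1, by rw [hgg]; exact he2⟩, by simp [hgg]⟩
  · intro pr hpr
    simp only [mem_coe, dS, mem_filter, mem_univ, true_and] at hpr
    obtain ⟨⟨h1, h2⟩, h3⟩ := hpr
    rw [Prod.mk.injEq] at h3
    obtain ⟨h31, h32⟩ := h3
    have hh : glueF i (prefF i pr.2) e.2 = pr.2 := by
      funext j
      simp only [glueF, prefF]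
      split
      · rfl
      · rename_i hj
        rw [← h32]; simp only [glueF, if_neg hj]
    show (e.1, glueF i (prefF i pr.2) e.2) = pr
    rw [hh, ← h31]
  · intro p hp
    simp only [mem_coe, pS, mem_filter, mem_univ, true_and] at hp
    show prefF i (glueF i p e.2) = p
    rw [prefF_glueF, hp]

private lemma cS_sq_le_dS (i : Fin q) : (cS g i).card ^ 2 ≤ (dS g i).card := by
  classical
  rw [cS_card g i, dS_card g i, eS_card g i]
  exact sq_sum_le_card_mul_sum_sq


open scoped Classical in
private lemma slice_card_mul (i : Fin q) (c : H) :
    (univ.filter fun f : Fin q → H => f i = c).card * Fintype.card H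
      = Fintype.card (Fin q → H) := by
  have hpart : Fintype.card (Fin q → H)
      = ∑ c' : H, (univ.filter fun f : Fin q → H => f i = c').card := by
    rw [← card_univ]
    exact card_eq_sum_card_fiberwise fun f _ => mem_univ _
  have heq : ∀ c' : H, (univ.filter fun f : Fin q → H => f i = c').card
      = (univ.filter fun f : Fin q → H => f i = c).card := by
    intro c'
    refine card_nbij' (fun f => Function.update f i c) (fun f => Function.update f i c') ?_ ?_ ?_ ?_
    · intro f _; simp
    · intro f _; simp
    · intro f hf
      simp only [mem_coe, mem_filter, mem_univ, true_and] at hf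
      funext j
      by_cases hj : j = i
      · subst hj; simp [hf]
      · simp [Function.update_of_ne hj]
    · intro f hf
      simp only [mem_coe, mem_filter, mem_univ, true_and] at hf
      funext j
      by_cases hj : j = i
      · subst hj; simp [hf]
      · simp [Function.update_of_ne hj]
  rw [hpart, Finset.sum_congr rfl fun c' _ => heq c', sum_const, card_univ, smul_eq_mul, mul_comm]

open scoped Classical in
/-- bad pairs where both land on i and the i-th values coincide -/
private noncomputable def bS (i : Fin q) : Finset ((Fin q → H) × (Fin q → H)) :=
  (dS g i).filter fun pr => pr.1 i = pr.2 i

open scoped Classical in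
private noncomputable def gS (i : Fin q) : Finset ((Fin q → H) × (Fin q → H)) :=
  (dS g i).filter fun pr => ¬ pr.1 i = pr.2 i

open scoped Classical in
private lemma bS_gS_card (i : Fin q) : (bS g i).card + (gS g i).card = (dS g i).card :=
  card_filter_add_card_filter_not _

open scoped Classical in
private lemma bS_card_mul (i : Fin q) :
    (bS g i).card * Fintype.card H ≤ (cS g i).card * Fintype.card (Fin q → H) := by
  have hsub : bS g i ⊆ univ.filter fun pr : (Fin q → H) × (Fin q → H) =>
      g pr.1 = some i ∧ pr.2 i = pr.1 i := by
    intro pr hpr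
    simp only [bS, dS, mem_filter, mem_univ, true_and] at hpr ⊢
    exact ⟨hpr.1.1, hpr.2.symm⟩
  have hcard : (univ.filter fun pr : (Fin q → H) × (Fin q → H) =>
      g pr.1 = some i ∧ pr.2 i = pr.1 i).card
      = ∑ hs ∈ cS g i, (univ.filter fun f : Fin q → H => f i = hs i).card := by
    rw [card_eq_sum_card_fiberwise (f := Prod.fst) (t := cS g i)
      (fun pr hpr => by
        simp only [mem_coe, mem_filter, mem_univ, true_and] at hpr
        simp [cS, hpr.1])]
    refine Finset.sum_congr rfl fun hs hhs => ?_
    refine card_nbij' Prod.snd (fun f => (hs, f)) ?_ ?_ ?_ ?_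
    · intro pr hpr
      simp only [mem_coe, mem_filter, mem_univ, true_and] at hpr
      simp [hpr.1.2, hpr.2]
    · intro f hf
      simp only [mem_coe, cS, mem_filter, mem_univ, true_and] at hhs hf
      simp [hhs, hf]
    · intro pr hpr
      simp only [mem_coe, mem_filter, mem_univ, true_and] at hpr
      rw [← hpr.2]
    · intro f _; rfl
  calc (bS g i).card * Fintype.card H
      ≤ (∑ hs ∈ cS g i, (univ.filter fun f : Fin q → H => f i = hs i).card)
          * Fintype.card H := by
        rw [← hcard]
        exact Nat.mul_le_mul_right _ (card_le_card hsub)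
    _ = ∑ hs ∈ cS g i, (univ.filter fun f : Fin q → H => f i = hs i).card * Fintype.card H :=
        Finset.sum_mul _ _ _
    _ = ∑ _hs ∈ cS g i, Fintype.card (Fin q → H) :=
        Finset.sum_congr rfl fun hs _ => slice_card_mul _ _
    _ = (cS g i).card * Fintype.card (Fin q → H) := by rw [sum_const, smul_eq_mul]

open scoped Classical in
/-- all forking-success pairs -/
private noncomputable def gT : Finset ((Fin q → H) × (Fin q → H)) :=
  univ.filter fun pr => ∃ i : Fin q,
    g pr.1 = some i ∧ g (glueF i pr.1 pr.2) = some i ∧ pr.1 i ≠ pr.2 i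

open scoped Classical in
private lemma gT_card : (gT g).card = ∑ i : Fin q, (gS g i).card := by
  rw [card_eq_sum_card_fiberwise (f := fun pr => g pr.1) (t := (univ : Finset (Option (Fin q))))
    (fun pr _ => mem_univ _), Fintype.sum_option]
  have h0 : ((gT g).filter fun pr => g pr.1 = none).card = 0 := by
    rw [Finset.card_eq_zero]
    ext pr
    simp only [gT, mem_filter, mem_univ, true_and, Finset.notMem_empty, iff_false, not_and]
    rintro ⟨i, h1, -⟩ h2
    rw [h1] at h2; exact Option.some_ne_none _ h2
  rw [h0, zero_add]
  refine Finset.sum_congr rfl fun i _ => ?_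
  congr 1
  ext pr
  simp only [gT, gS, dS, mem_filter, mem_univ, true_and]
  constructor
  · rintro ⟨⟨i', h1, h2, h3⟩, h4⟩
    rw [h4] at h1
    have hii : i = i' := by
      have := Option.some.inj h1
      exact this
    subst hii
    exact ⟨⟨h4, h2⟩, h3⟩
  · rintro ⟨⟨h1, h2⟩, h3⟩
    exact ⟨⟨i, h1, h2, h3⟩, h1⟩

open scoped Classical in
/-- total accepted single runs -/
private noncomputable def cT : Finset (Fin q → H) :=
  univ.filter fun hs => g hs ≠ none

open scoped Classical in
private lemma cT_card : (cT g).card = ∑ i : Fin q, (cS g i).card := by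
  rw [card_eq_sum_card_fiberwise (f := fun hs => g hs) (t := (univ : Finset (Option (Fin q))))
    (fun hs _ => mem_univ _), Fintype.sum_option]
  have h0 : ((cT g).filter fun hs => g hs = none).card = 0 := by
    rw [Finset.card_eq_zero]
    ext hs
    simp only [cT, mem_filter, mem_univ, true_and, Finset.notMem_empty, iff_false, not_and]
    exact fun h1 h2 => h1 h2
  rw [h0, zero_add]
  refine Finset.sum_congr rfl fun i _ => ?_
  congr 1
  ext hs
  simp only [cT, cS, mem_filter, mem_univ, true_and]
  constructor
  · rintro ⟨-, h⟩; exact h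
  · intro h; exact ⟨by rw [h]; exact Option.some_ne_none _, h⟩

open scoped Classical in
/-- THE key counting inequality. -/
private lemma count_key :
    (cT g).card ^ 2 * Fintype.card H
      ≤ q * Fintype.card H * (gT g).card
        + q * Fintype.card (Fin q → H) * (cT g).card := by
  have h1 : (cT g).card ^ 2 ≤ q * ∑ i : Fin q, (cS g i).card ^ 2 := by
    rw [cT_card]
    simpa using sq_sum_le_card_mul_sum_sq (s := (univ : Finset (Fin q)))
      (f := fun i => (cS g i).card)
  have h2 : ∀ i : Fin q, (cS g i).card ^ 2 ≤ (gS g i).card + (bS g i).card := fun i =>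
    (cS_sq_le_dS g i).trans (by rw [← bS_gS_card g i]; omega)
  calc (cT g).card ^ 2 * Fintype.card H
      ≤ (q * ∑ i : Fin q, (cS g i).card ^ 2) * Fintype.card H :=
        Nat.mul_le_mul_right _ h1
    _ ≤ (q * ∑ i : Fin q, ((gS g i).card + (bS g i).card)) * Fintype.card H := by
        refine Nat.mul_le_mul_right _ (Nat.mul_le_mul_left _ (Finset.sum_le_sum fun i _ => h2 i))
    _ = q * ((∑ i : Fin q, (gS g i).card) * Fintype.card H
          + ∑ i : Fin q, (bS g i).card * Fintype.card H) := by
        rw [Finset.sum_add_distrib]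
        simp only [← Finset.sum_mul]
        ring
    _ ≤ q * ((∑ i : Fin q, (gS g i).card) * Fintype.card H
          + ∑ i : Fin q, (cS g i).card * Fintype.card (Fin q → H)) := by
        refine Nat.mul_le_mul_left _ (Nat.add_le_add_left (Finset.sum_le_sum fun i _ =>
          bS_card_mul g i) _)
    _ = q * Fintype.card H * (gT g).card + q * Fintype.card (Fin q → H) * (cT g).card := by
        rw [gT_card, cT_card]
        simp only [← Finset.sum_mul]
        ring

open scoped Classical in
private lemma gT_card_fst :
    (gT g).card = ∑ hs : Fin q → H, (univ.filter fun hs' => ∃ i : Fin q,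
      g hs = some i ∧ g (glueF i hs hs') = some i ∧ hs i ≠ hs' i).card := by
  rw [card_eq_sum_card_fiberwise (f := Prod.fst) (t := (univ : Finset (Fin q → H)))
    (fun pr _ => mem_univ _)]
  refine Finset.sum_congr rfl fun hs _ => ?_
  refine card_nbij' Prod.snd (fun hs' => (hs, hs')) ?_ ?_ ?_ ?_
  · intro pr hpr
    simp only [mem_coe, gT, mem_filter, mem_univ, true_and] at hpr
    obtain ⟨⟨i, h1, h2, h3⟩, h4⟩ := hpr
    subst h4
    simp only [mem_coe, mem_filter, mem_univ, true_and]
    exact ⟨i, h1, h2, h3⟩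
  · intro hs' hhs'
    simp only [mem_coe, mem_filter, mem_univ, true_and] at hhs'
    simp only [mem_coe, gT, mem_filter, mem_univ, true_and]
    exact ⟨hhs', trivial⟩
  · intro pr hpr
    simp only [mem_coe, gT, mem_filter, mem_univ, true_and] at hpr
    rw [← hpr.2]
  · intro hs' _; rfl

end Counting

section ENNRealLemmas

open scoped ENNReal

private lemma two_mul_le_sq_add_sq' {a t : ℝ≥0∞} (h : a ≤ t) :
    2 * (a * t) ≤ a ^ 2 + t ^ 2 := by
  obtain ⟨d, rfl⟩ := exists_add_of_le h
  have expand : a ^ 2 + (a + d) ^ 2 = 2 * (a * (a + d)) + d ^ 2 := by ring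
  rw [expand]
  exact le_add_right le_rfl

private lemma two_mul_le_sq_add_sq (a t : ℝ≥0∞) : 2 * (a * t) ≤ a ^ 2 + t ^ 2 := by
  rcases le_total a t with h | h
  · exact two_mul_le_sq_add_sq' h
  · calc 2 * (a * t) = 2 * (t * a) := by ring
      _ ≤ t ^ 2 + a ^ 2 := two_mul_le_sq_add_sq' h
      _ = a ^ 2 + t ^ 2 := by ring

open scoped Classical in
private lemma uniform_outer {α : Type*} [Fintype α] [Nonempty α] (T : Set α) :
    (PMF.uniformOfFintype α).toOuterMeasure T
      = ((Finset.univ.filter fun x => x ∈ T).card : ℝ≥0∞) * (Fintype.card α : ℝ≥0∞)⁻¹ := by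
  rw [PMF.toOuterMeasure_apply_fintype]
  simp only [Set.indicator_apply, PMF.uniformOfFintype_apply]
  rw [← Finset.sum_filter, Finset.sum_const, nsmul_eq_mul]

private lemma div_key {C G N hc qn : ℕ} (hN : N ≠ 0) (hh : hc ≠ 0)
    (hkey : C ^ 2 * hc ≤ qn * hc * G + qn * N * C) :
    ((C : ℝ≥0∞) * (N : ℝ≥0∞)⁻¹) ^ 2
      ≤ (qn : ℝ≥0∞) * ((G : ℝ≥0∞) * (N : ℝ≥0∞)⁻¹ * (N : ℝ≥0∞)⁻¹)
        + ((qn : ℝ≥0∞) * (hc : ℝ≥0∞)⁻¹) * ((C : ℝ≥0∞) * (N : ℝ≥0∞)⁻¹) := by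
  have hN0 : (N : ℝ≥0∞) ≠ 0 := by exact_mod_cast hN
  have hNt : (N : ℝ≥0∞) ≠ ∞ := ENNReal.natCast_ne_top N
  have hh0 : (hc : ℝ≥0∞) ≠ 0 := by exact_mod_cast hh
  have hht : (hc : ℝ≥0∞) ≠ ∞ := ENNReal.natCast_ne_top hc
  have hc0 : ((N : ℝ≥0∞) * (N : ℝ≥0∞) * (hc : ℝ≥0∞)) ≠ 0 := by
    simp [hN0, hh0]
  have hct : ((N : ℝ≥0∞) * (N : ℝ≥0∞) * (hc : ℝ≥0∞)) ≠ ∞ := by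
    finiteness
  rw [← ENNReal.mul_le_mul_iff_left hc0 hct]
  have hcancelN : (N : ℝ≥0∞)⁻¹ * (N : ℝ≥0∞) = 1 := ENNReal.inv_mul_cancel hN0 hNt
  have hcancelH : (hc : ℝ≥0∞)⁻¹ * (hc : ℝ≥0∞) = 1 := ENNReal.inv_mul_cancel hh0 hht
  have lhs_eq : ((C : ℝ≥0∞) * (N : ℝ≥0∞)⁻¹) ^ 2 * ((N : ℝ≥0∞) * (N : ℝ≥0∞) * (hc : ℝ≥0∞))
      = (C : ℝ≥0∞) ^ 2 * (hc : ℝ≥0∞) * (((N : ℝ≥0∞)⁻¹ * (N : ℝ≥0∞))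
        * ((N : ℝ≥0∞)⁻¹ * (N : ℝ≥0∞))) := by ring
  have rhs_eq : ((qn : ℝ≥0∞) * ((G : ℝ≥0∞) * (N : ℝ≥0∞)⁻¹ * (N : ℝ≥0∞)⁻¹)
        + ((qn : ℝ≥0∞) * (hc : ℝ≥0∞)⁻¹) * ((C : ℝ≥0∞) * (N : ℝ≥0∞)⁻¹))
          * ((N : ℝ≥0∞) * (N : ℝ≥0∞) * (hc : ℝ≥0∞))
      = (qn : ℝ≥0∞) * (hc : ℝ≥0∞) * (G : ℝ≥0∞) * (((N : ℝ≥0∞)⁻¹ * (N : ℝ≥0∞))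
          * ((N : ℝ≥0∞)⁻¹ * (N : ℝ≥0∞)))
        + (qn : ℝ≥0∞) * (N : ℝ≥0∞) * (C : ℝ≥0∞) * (((N : ℝ≥0∞)⁻¹ * (N : ℝ≥0∞))
          * ((hc : ℝ≥0∞)⁻¹ * (hc : ℝ≥0∞))) := by ring
  rw [lhs_eq, rhs_eq, hcancelN, hcancelH, one_mul, mul_one, mul_one, mul_one]
  exact_mod_cast hkey

private lemma tsum_pmf_mul {α : Type*} (p : PMF α) (c : ℝ≥0∞) (f : α → ℝ≥0∞) :
    ∑' a, p a * (c * f a) = c * ∑' a, p a * f a := by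
  rw [← ENNReal.tsum_mul_left]
  exact tsum_congr fun a => by ring

private lemma tsum_pmf_combo {α : Type*} (p : PMF α) (f g : α → ℝ≥0∞) (c1 c2 c3 : ℝ≥0∞) :
    ∑' a, p a * (c1 * f a + c2 * g a + c3)
      = c1 * ∑' a, p a * f a + c2 * ∑' a, p a * g a + c3 := by
  have : ∀ a, p a * (c1 * f a + c2 * g a + c3)
      = p a * (c1 * f a) + p a * (c2 * g a) + p a * c3 := fun a => by ring
  simp_rw [this]
  rw [ENNReal.tsum_add, ENNReal.tsum_add, tsum_pmf_mul, tsum_pmf_mul,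
    ENNReal.tsum_mul_right, p.tsum_coe, one_mul]

private lemma pmf_outer_le_one {α : Type*} (p : PMF α) (s : Set α) :
    p.toOuterMeasure s ≤ 1 := by
  rw [PMF.toOuterMeasure_apply, ← p.tsum_coe]
  exact Summable.tsum_le_tsum (fun a => Set.indicator_apply_le fun _ => le_rfl)
    ENNReal.summable ENNReal.summable

end ENNRealLemmas

/-- general forking lemma: `A` takes an input `x`, coins `ρ`, and `q`
uniform values `h₁,…,h_q ∈ H` (|H| = h ≥ 2), and outputs `(J, σ)` with
`J ∈ {0,…,q}` (modelled as `Option (Fin q)`, `none` for 0).  Let `acc = Pr[J ≥ 1]`.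
The forking algorithm reruns `A` with the same input, coins, and `h₁,…,h_{I−1}`, but
fresh `h'_I,…,h'_q`, succeeding if the same index `I ≥ 1` is output twice and
`h_I ≠ h'_I`; `frk` is its success probability.  Then `frk ≥ acc·(acc/q − 1/h)`,
equivalently `acc ≤ q/h + √(q·frk)`. -/
theorem stmt12 {X R S : Type*} {H : Type*} [Fintype H] [DecidableEq H] [Nonempty H]
    (hH : 2 ≤ Fintype.card H)
    (q : ℕ) (hq : 1 ≤ q)
    (A : X → R → (Fin q → H) → Option (Fin q) × S)
    (xgen : PMF X) (rgen : PMF R)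
    (acc frk : ℝ≥0∞)
    (hacc : acc = (xgen.bind fun x => rgen.bind fun ρ =>
        (PMF.uniformOfFintype (Fin q → H)).map fun hs => A x ρ hs).toOuterMeasure
          {out : Option (Fin q) × S | out.1 ≠ none})
    (hfrk : frk = (xgen.bind fun x => rgen.bind fun ρ =>
        (PMF.uniformOfFintype (Fin q → H)).bind fun hs =>
          (PMF.uniformOfFintype (Fin q → H)).map fun hs' =>
            (x, ρ, hs, hs')).toOuterMeasure
          {t : X × R × (Fin q → H) × (Fin q → H) | ∃ i : Fin q,
            (A t.1 t.2.1 t.2.2.1).1 = some i ∧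
            (A t.1 t.2.1 (fun j => if j < i then t.2.2.1 j else t.2.2.2 j)).1 = some i ∧
            t.2.2.1 i ≠ t.2.2.2 i}) :
    acc.toReal * (acc.toReal / q - 1 / (Fintype.card H : ℝ)) ≤ frk.toReal ∧
      acc.toReal ≤ q / (Fintype.card H : ℝ) + Real.sqrt (q * frk.toReal) := by
  classical
  set g : X → R → (Fin q → H) → Option (Fin q) := fun x ρ hs => (A x ρ hs).1 with hg
  set n : ℝ≥0∞ := (Fintype.card (Fin q → H) : ℝ≥0∞) with hn
  set hcE : ℝ≥0∞ := (Fintype.card H : ℝ≥0∞) with hhcE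
  have hNne : Fintype.card (Fin q → H) ≠ 0 := Fintype.card_ne_zero
  have hHne : Fintype.card H ≠ 0 := Fintype.card_ne_zero
  -- Step A : closed form for acc
  have hacc2 : acc = ∑' x, xgen x * ∑' ρ, rgen ρ *
      (((cT (g x ρ)).card : ℝ≥0∞) * n⁻¹) := by
    rw [hacc, PMF.toOuterMeasure_bind_apply]
    refine tsum_congr fun x => ?_
    congr 1
    rw [PMF.toOuterMeasure_bind_apply]
    refine tsum_congr fun ρ => ?_
    congr 1
    rw [PMF.toOuterMeasure_map_apply, uniform_outer]
    have hset : (Finset.univ.filter fun hs : Fin q → H =>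
        hs ∈ ((fun hs => A x ρ hs) ⁻¹' {out : Option (Fin q) × S | out.1 ≠ none}))
        = cT (g x ρ) := by
      ext hs
      simp only [cT, Finset.mem_filter, Finset.mem_univ, true_and, Set.mem_preimage,
        Set.mem_setOf_eq, hg]
    rw [hset]
  -- Step B : closed form for frk
  have hfrk2 : frk = ∑' x, xgen x * ∑' ρ, rgen ρ *
      (((gT (g x ρ)).card : ℝ≥0∞) * n⁻¹ * n⁻¹) := by
    rw [hfrk, PMF.toOuterMeasure_bind_apply]
    refine tsum_congr fun x => ?_
    congr 1
    rw [PMF.toOuterMeasure_bind_apply]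
    refine tsum_congr fun ρ => ?_
    congr 1
    rw [PMF.toOuterMeasure_bind_apply]
    have hinner : ∀ hs : Fin q → H,
        ((PMF.uniformOfFintype (Fin q → H)).map fun hs' => (x, ρ, hs, hs')).toOuterMeasure
          {t : X × R × (Fin q → H) × (Fin q → H) | ∃ i : Fin q,
            (A t.1 t.2.1 t.2.2.1).1 = some i ∧
            (A t.1 t.2.1 (fun j => if j < i then t.2.2.1 j else t.2.2.2 j)).1 = some i ∧
            t.2.2.1 i ≠ t.2.2.2 i}
        = ((Finset.univ.filter fun hs' => ∃ i : Fin q, g x ρ hs = some i ∧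
            g x ρ (glueF i hs hs') = some i ∧ hs i ≠ hs' i).card : ℝ≥0∞) * n⁻¹ := by
      intro hs
      rw [PMF.toOuterMeasure_map_apply, uniform_outer]
      have hset : (Finset.univ.filter fun hs' : Fin q → H =>
          hs' ∈ ((fun hs' => (x, ρ, hs, hs')) ⁻¹'
            {t : X × R × (Fin q → H) × (Fin q → H) | ∃ i : Fin q,
              (A t.1 t.2.1 t.2.2.1).1 = some i ∧
              (A t.1 t.2.1 (fun j => if j < i then t.2.2.1 j else t.2.2.2 j)).1 = some i ∧
              t.2.2.1 i ≠ t.2.2.2 i}))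
          = Finset.univ.filter fun hs' => ∃ i : Fin q, g x ρ hs = some i ∧
              g x ρ (glueF i hs hs') = some i ∧ hs i ≠ hs' i := by
        ext hs'
        simp only [Finset.mem_filter, Finset.mem_univ, true_and, Set.mem_preimage,
          Set.mem_setOf_eq, hg]
        exact Iff.rfl
      rw [hset]
    rw [tsum_fintype]
    simp only [hinner, PMF.uniformOfFintype_apply]
    have hstep : ∀ hs : Fin q → H,
        (Fintype.card (Fin q → H) : ℝ≥0∞)⁻¹ *
          (((Finset.univ.filter fun hs' => ∃ i : Fin q, g x ρ hs = some i ∧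
            g x ρ (glueF i hs hs') = some i ∧ hs i ≠ hs' i).card : ℝ≥0∞) * n⁻¹)
        = (((Finset.univ.filter fun hs' => ∃ i : Fin q, g x ρ hs = some i ∧
            g x ρ (glueF i hs hs') = some i ∧ hs i ≠ hs' i).card : ℝ≥0∞)) * n⁻¹ * n⁻¹ := by
      intro hs; rw [hn]; ring
    rw [Finset.sum_congr rfl fun hs _ => hstep hs]
    simp only [← Finset.sum_mul]
    congr 2
    rw [gT_card_fst]
    push_cast
    rfl
  -- Step C : pointwise inequality
  have hpt : ∀ (x : X) (ρ : R),
      (2 * acc) * (((cT (g x ρ)).card : ℝ≥0∞) * n⁻¹)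
        ≤ (q : ℝ≥0∞) * (((gT (g x ρ)).card : ℝ≥0∞) * n⁻¹ * n⁻¹)
          + ((q : ℝ≥0∞) * hcE⁻¹) * (((cT (g x ρ)).card : ℝ≥0∞) * n⁻¹) + acc ^ 2 := by
    intro x ρ
    calc (2 * acc) * (((cT (g x ρ)).card : ℝ≥0∞) * n⁻¹)
        = 2 * ((((cT (g x ρ)).card : ℝ≥0∞) * n⁻¹) * acc) := by ring
      _ ≤ (((cT (g x ρ)).card : ℝ≥0∞) * n⁻¹) ^ 2 + acc ^ 2 := two_mul_le_sq_add_sq _ _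
      _ ≤ (q : ℝ≥0∞) * (((gT (g x ρ)).card : ℝ≥0∞) * n⁻¹ * n⁻¹)
          + ((q : ℝ≥0∞) * hcE⁻¹) * (((cT (g x ρ)).card : ℝ≥0∞) * n⁻¹) + acc ^ 2 := by
        refine add_le_add ?_ le_rfl
        exact div_key hNne hHne (count_key (g x ρ))
  -- Step D : sum the pointwise inequality
  have hglob : (2 * acc) * acc
      ≤ (q : ℝ≥0∞) * frk + ((q : ℝ≥0∞) * hcE⁻¹) * acc + acc ^ 2 := by
    calc (2 * acc) * acc
        = ∑' x, xgen x * ((2 * acc) * ∑' ρ, rgen ρ *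
            (((cT (g x ρ)).card : ℝ≥0∞) * n⁻¹)) := by
          nth_rewrite 2 [hacc2]
          exact (tsum_pmf_mul xgen (2 * acc) _).symm
      _ = ∑' x, xgen x * (∑' ρ, rgen ρ * ((2 * acc) *
            (((cT (g x ρ)).card : ℝ≥0∞) * n⁻¹))) := by
          exact tsum_congr fun x => by rw [tsum_pmf_mul]
      _ ≤ ∑' x, xgen x * (∑' ρ, rgen ρ *
            ((q : ℝ≥0∞) * (((gT (g x ρ)).card : ℝ≥0∞) * n⁻¹ * n⁻¹)
              + ((q : ℝ≥0∞) * hcE⁻¹) * (((cT (g x ρ)).card : ℝ≥0∞) * n⁻¹) + acc ^ 2)) := by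
          refine Summable.tsum_le_tsum (fun x => mul_le_mul_right ?_ _)
            ENNReal.summable ENNReal.summable
          exact Summable.tsum_le_tsum (fun ρ => mul_le_mul_right (hpt x ρ) _)
            ENNReal.summable ENNReal.summable
      _ = ∑' x, xgen x * ((q : ℝ≥0∞) * (∑' ρ, rgen ρ *
              (((gT (g x ρ)).card : ℝ≥0∞) * n⁻¹ * n⁻¹))
            + ((q : ℝ≥0∞) * hcE⁻¹) * (∑' ρ, rgen ρ *
              (((cT (g x ρ)).card : ℝ≥0∞) * n⁻¹)) + acc ^ 2) := by
          exact tsum_congr fun x => by rw [tsum_pmf_combo]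
      _ = (q : ℝ≥0∞) * frk + ((q : ℝ≥0∞) * hcE⁻¹) * acc + acc ^ 2 := by
          rw [tsum_pmf_combo, ← hacc2, ← hfrk2]
  -- Step E : cancel acc^2
  have hacc_le : acc ≤ 1 := by rw [hacc]; exact pmf_outer_le_one _ _
  have hfrk_le : frk ≤ 1 := by rw [hfrk]; exact pmf_outer_le_one _ _
  have hacct : acc ≠ ∞ := fun h => by simp [h] at hacc_le
  have hfrkt : frk ≠ ∞ := fun h => by simp [h] at hfrk_le
  have key : acc ^ 2 ≤ (q : ℝ≥0∞) * frk + ((q : ℝ≥0∞) * hcE⁻¹) * acc := by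
    have e : (2 * acc) * acc = acc ^ 2 + acc ^ 2 := by ring
    rw [e] at hglob
    exact (ENNReal.add_le_add_iff_right (ENNReal.pow_ne_top hacct)).mp hglob
  -- Step F : move to the reals
  have hqcast : (q : ℝ≥0∞) ≠ ∞ := ENNReal.natCast_ne_top q
  have hinvne : hcE⁻¹ ≠ ∞ := ENNReal.inv_ne_top.mpr (by
    rw [hhcE]; exact_mod_cast hHne)
  have hrhs_ne : (q : ℝ≥0∞) * frk + ((q : ℝ≥0∞) * hcE⁻¹) * acc ≠ ∞ :=
    ENNReal.add_ne_top.mpr ⟨ENNReal.mul_ne_top hqcast hfrkt,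
      ENNReal.mul_ne_top (ENNReal.mul_ne_top hqcast hinvne) hacct⟩
  have keyr : acc.toReal ^ 2 ≤ (q : ℝ) * frk.toReal
      + (q : ℝ) * (Fintype.card H : ℝ)⁻¹ * acc.toReal := by
    have h := ENNReal.toReal_mono hrhs_ne key
    rw [ENNReal.toReal_pow] at h
    rw [ENNReal.toReal_add (ENNReal.mul_ne_top hqcast hfrkt)
      (ENNReal.mul_ne_top (ENNReal.mul_ne_top hqcast hinvne) hacct), ENNReal.toReal_mul,
      ENNReal.toReal_mul, ENNReal.toReal_mul, ENNReal.toReal_inv] at h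
    simpa [hhcE] using h
  have hq0 : (0 : ℝ) < q := by exact_mod_cast Nat.lt_of_lt_of_le Nat.zero_lt_one hq
  have hh0 : (0 : ℝ) < (Fintype.card H : ℝ) := by
    have : 0 < Fintype.card H := Nat.lt_of_lt_of_le (by norm_num) hH
    exact_mod_cast this
  have ha0 : 0 ≤ acc.toReal := ENNReal.toReal_nonneg
  have hf0 : 0 ≤ frk.toReal := ENNReal.toReal_nonneg
  constructor
  · -- first inequality
    rw [mul_sub, sub_le_iff_le_add]
    have e1 : acc.toReal * (acc.toReal / q) = acc.toReal ^ 2 / q := by ring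
    rw [e1, div_le_iff₀ hq0]
    calc acc.toReal ^ 2
        ≤ (q : ℝ) * frk.toReal + (q : ℝ) * (Fintype.card H : ℝ)⁻¹ * acc.toReal := keyr
      _ = (frk.toReal + acc.toReal * (1 / (Fintype.card H : ℝ))) * q := by ring
  · -- second inequality
    rcases le_or_gt acc.toReal ((q : ℝ) / (Fintype.card H : ℝ)) with hle | hlt
    · have := Real.sqrt_nonneg ((q : ℝ) * frk.toReal)
      linarith
    · have hsub0 : 0 ≤ acc.toReal - (q : ℝ) / (Fintype.card H : ℝ) := le_of_lt (by linarith)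
      have hsq : (acc.toReal - (q : ℝ) / (Fintype.card H : ℝ)) ^ 2 ≤ (q : ℝ) * frk.toReal := by
        have hqh0 : 0 < (q : ℝ) / (Fintype.card H : ℝ) := div_pos hq0 hh0
        have hprod : 0 ≤ ((q : ℝ) / (Fintype.card H : ℝ))
            * (acc.toReal - (q : ℝ) / (Fintype.card H : ℝ)) :=
          mul_nonneg (le_of_lt hqh0) hsub0
        have hdiv : (q : ℝ) * (Fintype.card H : ℝ)⁻¹ = (q : ℝ) / (Fintype.card H : ℝ) := by
          rw [div_eq_mul_inv]
        nlinarith [keyr]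
      have := (Real.le_sqrt hsub0 (mul_nonneg (le_of_lt hq0) hf0)).mpr hsq
      linarith
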